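/- arXiv:1801.03536 — 2 statements merged into one kernel-verified Lean document; each statement's English description precedes it below -/
import Mathlib

section
/- Let n₀ = (#A)² − 2(#A) + 2. For every integer n ≥ 2n₀, max_{a,b,c ∈ A} | |σⁿ(a)|_c/|σⁿ(a)| − |σⁿ(b)|_c/|σⁿ(b)| | ≤ 2·exp( max_{b∈A} d(e_b M_σ^{n₀}, α) )^{ τ_B(M_σ^{n₀})^{⌊n/n₀⌋ − 1} } − 2. -/
open List Filter

section Defs

variable {A : Type*}

/-- The segment `u_[i,j)` of the sequence `u`. -/
def seg (u : ℕ → A) (i j : ℕ) : List A :=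
  (List.range (j - i)).map fun k => u (i + k)

/-- A substitution applied to a word, letter by letter. -/
def substWord (σ : A → List A) (w : List A) : List A := w.flatMap σ

/-- `σ^p` applied to a word. -/
def substPow (σ : A → List A) (p : ℕ) (w : List A) : List A := (substWord σ)^[p] w

/-- A substitution is primitive if some power of it sends every letter to a word
containing every letter. -/
def IsPrimitiveSubst (σ : A → List A) : Prop :=
  ∃ k : ℕ, ∀ a b : A, a ∈ substPow σ k [b]

/-- `u` is a fixed point of `σ`: the image of every prefix of `u` is again a prefix of `u`. -/
def IsFixedPoint (σ : A → List A) (u : ℕ → A) : Prop :=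
  ∀ m : ℕ, substWord σ (seg u 0 m) = seg u 0 (substWord σ (seg u 0 m)).length

/-- `u` is aperiodic under the left shift: `T^i u ≠ u` for all `i ≥ 1`. -/
def AperiodicSeq (u : ℕ → A) : Prop := ∀ i : ℕ, 1 ≤ i → (fun n => u (n + i)) ≠ u

/-- The set `E_p` of natural `p`-cutting points. -/
def cutPoints (σ : A → List A) (u : ℕ → A) (p : ℕ) : Set ℕ :=
  { m | ∃ n : ℕ, m = (substPow σ p (seg u 0 n)).length }

/-- Unilateral recognizability of `σ` (with fixed point `u`). -/
def UnilaterallyRecognizable (σ : A → List A) (u : ℕ → A) : Prop :=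
  ∃ L : ℕ, 1 ≤ L ∧ ∀ i j : ℕ,
    seg u i (i + L) = seg u j (j + L) → i ∈ cutPoints σ u 1 → j ∈ cutPoints σ u 1

/-- `L_n(u)`: the set of factors of `u` of length `n`. -/
def factors (u : ℕ → A) (n : ℕ) : Set (List A) := { w | ∃ i : ℕ, w = seg u i (i + n) }

/-- `L(u)`: the language of `u` (including the empty word). -/
def lang (u : ℕ → A) : Set (List A) := { w | ∃ i n : ℕ, w = seg u i (i + n) }

/-- `w^n`: the concatenation of `n` copies of `w`. -/
def wpow (w : List A) (n : ℕ) : List A := (List.replicate n w).flatten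

/-- A nonempty word `v` is primitive if `v = w^n` with `w` nonempty forces `w = v`. -/
def PrimitiveWord (v : List A) : Prop :=
  ∀ w : List A, w ≠ [] → ∀ n : ℕ, 1 ≤ n → v = wpow w n → w = v

/-- `g` is a gap of occurrences of `w` in `u` if every interval of length `g` in `ℤ₊`
contains an occurrence of `w`. -/
def IsGap (u : ℕ → A) (w : List A) (g : ℕ) : Prop := ∀ i : ℕ, w <:+: seg u i (i + g)

/-- The minimal gap of a word. -/
noncomputable def minGap (u : ℕ → A) (w : List A) : ℕ := sInf { g | IsGap u w g }

/-- `g`: the maximum over `w ∈ L₂(u)` of the minimal gap of `w`. -/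
noncomputable def gapConst (u : ℕ → A) : ℕ :=
  sSup { m | ∃ w ∈ factors u 2, m = minGap u w }

/-- A natural `p`-cutting `{α, σ^p(u_{i'}), …, σ^p(u_{i'+k-1}), β}` of `u_[i,i+ℓ)`. -/
def IsNaturalCutting (σ : A → List A) (u : ℕ → A) (p i ℓ : ℕ)
    (α : List A) (i' k : ℕ) (β : List A) : Prop :=
  1 ≤ k ∧
  α <:+ substPow σ p [u (i' - 1)] ∧
  β <+: substPow σ p [u (i' + k)] ∧
  seg u i (i + ℓ) = α ++ substPow σ p (seg u i' (i' + k)) ++ β ∧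
  i + α.length = (substPow σ p (seg u 0 i')).length

section Fin

variable [Fintype A] [Nonempty A] [DecidableEq A]

/-- The incidence matrix of a substitution: the `(a,b)` entry is `|σ(a)|_b`. -/
def incMatrix (σ : A → List A) : Matrix A A ℕ := Matrix.of fun a b => (σ a).count b

/-- The incidence matrix as a real matrix. -/
noncomputable def incMatrixR (σ : A → List A) : Matrix A A ℝ :=
  Matrix.of fun a b => ((σ a).count b : ℝ)

/-- `S_p = max_{a ∈ A} |σ^p(a)|`. -/
def Sp (σ : A → List A) (p : ℕ) : ℕ :=
  Finset.univ.sup' Finset.univ_nonempty fun a => (substPow σ p [a]).length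

/-- `I_p = min_{a ∈ A} |σ^p(a)|`. -/
def Ip (σ : A → List A) (p : ℕ) : ℕ :=
  Finset.univ.inf' Finset.univ_nonempty fun a => (substPow σ p [a]).length

/-- `C = ⌈(max_b β_b)/(min_b β_b)⌉` for a positive eigenvector `β`. -/
noncomputable def Cst (β : A → ℝ) : ℕ :=
  ⌈(Finset.univ.sup' Finset.univ_nonempty β) / (Finset.univ.inf' Finset.univ_nonempty β)⌉₊

/-- `K = ⌈λ C² max{2(g+1), (#A)²}⌉`. -/
noncomputable def Kst (u : ℕ → A) (lam : ℝ) (β : A → ℝ) : ℕ :=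
  ⌈lam * (Cst β : ℝ) ^ 2 *
    max (2 * ((gapConst u : ℝ) + 1)) ((Fintype.card A : ℝ) ^ 2)⌉₊

/-- The constant `p₀` of Lemma 4.2. -/
noncomputable def p0 (u : ℕ → A) (lam : ℝ) (β : A → ℝ) : ℕ :=
  (Kst u lam β) ^ 2 * ((Cst β) ^ 4 * (Kst u lam β + 1) + 2 * (Cst β) ^ 2 + 1) *
    (∑ n ∈ Finset.Icc ((Cst β) ^ 2 * (Kst u lam β + 1) + 2)
        ((Kst u lam β + 1) * (Cst β) ^ 6 + 2 * (Cst β) ^ 4 + (Cst β) ^ 2 + 2), n) + 1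

/-- The constant `L₀ = (C⁴(K+1)+2C²+1) S_{p₀}`. -/
noncomputable def L0 (σ : A → List A) (u : ℕ → A) (lam : ℝ) (β : A → ℝ) : ℕ :=
  ((Cst β) ^ 4 * (Kst u lam β + 1) + 2 * (Cst β) ^ 2 + 1) * Sp σ (p0 u lam β)

/-- The ℓ¹ norm of a vector. -/
def l1norm (f : A → ℝ) : ℝ := ∑ a, |f a|

/-- The projective metric on positive row vectors. -/
noncomputable def projMetric (x y : A → ℝ) : ℝ :=
  Real.log ((Finset.univ.sup' Finset.univ_nonempty fun a => x a / y a) /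
    (Finset.univ.inf' Finset.univ_nonempty fun a => x a / y a))

/-- The Birkhoff contraction coefficient of a matrix. -/
noncomputable def birkhoff (M : Matrix A A ℝ) : ℝ :=
  sSup { r | ∃ x y : A → ℝ, (∀ a, 0 < x a) ∧ (∀ a, 0 < y a) ∧
    LinearIndependent ℝ ![x, y] ∧
    r = projMetric (Matrix.vecMul x M) (Matrix.vecMul y M) / projMetric x y }

end Fin

/-- Membership in the vertex set `V^*`: pairs `(xac, ybc)` of factors of `u` of length
`N + L₁ + 1` with `a ≠ b` and `|c| = L₁`. -/
def memVstar (u : ℕ → A) (N L₁ : ℕ) (p : List A × List A) : Prop :=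
  ∃ (x y c : List A) (a b : A), a ≠ b ∧
    x.length = N ∧ y.length = N ∧ c.length = L₁ ∧
    p.1 = x ++ a :: c ∧ p.2 = y ++ b :: c ∧
    p.1 ∈ factors u (N + L₁ + 1) ∧ p.2 ∈ factors u (N + L₁ + 1)

/-- An edge between representatives: there is a word `w` with `s'w` a suffix of `σ(s)` and
`t'w` a suffix of `σ(t)`. -/
def edgeRep (σ : A → List A) (p q : List A × List A) : Prop :=
  ∃ w : List A, w ≠ [] ∧ (q.1 ++ w) <:+ substWord σ p.1 ∧ (q.2 ++ w) <:+ substWord σ p.2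

/-- An edge in the graph `G` between the unordered pairs represented by `p` and `q`. -/
def graphEdge (σ : A → List A) (p q : List A × List A) : Prop :=
  edgeRep σ p q ∨ edgeRep σ p q.swap ∨ edgeRep σ p.swap q ∨ edgeRep σ p.swap q.swap

/-- A representative generates a gap of natural 1-cutting points. -/
def genGapRep (σ : A → List A) (p : List A × List A) : Prop :=
  ∃ (α β : A) (γ δ : List A),
    (σ α <:+ σ β ∧ σ α ≠ σ β) ∧
    List.Forall₂ (fun s t => σ s = σ t) γ δ ∧
    (α :: γ) <:+ substWord σ p.1 ∧ (β :: δ) <:+ substWord σ p.2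

/-- The unordered pair represented by `p` generates a gap of natural 1-cutting points. -/
def genGap (σ : A → List A) (p : List A × List A) : Prop :=
  genGapRep σ p ∨ genGapRep σ p.swap

/-- The list of consecutive two-letter blocks of a word. -/
def pairsList (l : List A) : List (List A) :=
  List.zipWith (fun a b => [a, b]) l l.tail

end Defs

set_option linter.unusedSectionVars false
set_option linter.deprecated false
set_option maxHeartbeats 1000000


section Walks
variable {A : Type*}

def walkRel (E : A → A → Prop) : ℕ → A → A → Prop
  | 0 => Eq
  | (t+1) => fun u v => ∃ c, E u c ∧ walkRel E t c v

theorem walkRel_zero {E : A → A → Prop} {u v : A} : walkRel E 0 u v ↔ u = v := Iff.rfl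

theorem walkRel_succ {E : A → A → Prop} {t : ℕ} {u v : A} :
    walkRel E (t+1) u v ↔ ∃ c, E u c ∧ walkRel E t c v := Iff.rfl

theorem walkRel_add {E : A → A → Prop} :
    ∀ (s t : ℕ) (u v : A), walkRel E (s + t) u v ↔ ∃ c, walkRel E s u c ∧ walkRel E t c v := by
  intro s
  induction s with
  | zero => intro t u v; simp [walkRel_zero, Nat.zero_add]
  | succ s ih =>
    intro t u v
    have : s + 1 + t = (s + t) + 1 := by omega
    rw [this, walkRel_succ]
    constructor
    · rintro ⟨c, hc, hw⟩
      obtain ⟨d, hd1, hd2⟩ := (ih t c v).1 hw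
      exact ⟨d, (walkRel_succ).2 ⟨c, hc, hd1⟩, hd2⟩
    · rintro ⟨d, hd1, hd2⟩
      obtain ⟨c, hc, hw⟩ := (walkRel_succ).1 hd1
      exact ⟨c, hc, (ih t c v).2 ⟨d, hw, hd2⟩⟩

theorem walkRel_iff_fun {E : A → A → Prop} :
    ∀ (t : ℕ) (u v : A), walkRel E t u v ↔
      ∃ f : ℕ → A, f 0 = u ∧ f t = v ∧ ∀ i < t, E (f i) (f (i+1)) := by
  intro t
  induction t with
  | zero =>
    intro u v
    simp only [walkRel_zero]
    constructor
    · rintro rfl; exact ⟨fun _ => u, rfl, rfl, by omega⟩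
    · rintro ⟨f, h0, ht, _⟩; rw [← h0, ← ht]
  | succ t ih =>
    intro u v
    rw [walkRel_succ]
    constructor
    · rintro ⟨c, hc, hw⟩
      obtain ⟨f, h0, ht, he⟩ := (ih c v).1 hw
      refine ⟨fun i => match i with | 0 => u | (j+1) => f j, rfl, ht, ?_⟩
      intro i hi
      match i with
      | 0 => simpa [h0] using hc
      | (j+1) => exact he j (by omega)
    · rintro ⟨f, h0, ht, he⟩
      refine ⟨f 1, by rw [← h0]; exact he 0 (by omega), (ih (f 1) v).2 ⟨fun i => f (i+1), rfl, ht, fun i hi => he (i+1) (by omega)⟩⟩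

theorem walkRel_of_fun {E : A → A → Prop} {f : ℕ → A} (hf : ∀ i, E (f i) (f (i+1))) :
    ∀ (t i : ℕ), walkRel E t (f i) (f (i + t)) := by
  intro t
  induction t with
  | zero => intro i; rfl
  | succ t ih =>
    intro i
    refine walkRel_succ.2 ⟨f (i+1), hf i, ?_⟩
    have : i + (t+1) = (i+1) + t := by omega
    rw [this]; exact ih (i+1)

theorem walkRel_pad {E : A → A → Prop} {u v : A} (h : E u u) {e : ℕ} (hw : walkRel E e u v) :
    ∀ p : ℕ, walkRel E (p + e) u v := by
  intro p
  induction p with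
  | zero => simpa using hw
  | succ p ih =>
    have : p + 1 + e = (p + e) + 1 := by omega
    rw [this]; exact walkRel_succ.2 ⟨u, h, ih⟩

theorem walkRel_shorten [Fintype A] {E : A → A → Prop} :
    ∀ t {u v : A}, walkRel E t u v → ∃ e, e ≤ Fintype.card A - 1 ∧ walkRel E e u v := by
  intro t
  induction t using Nat.strong_induction_on with
  | _ t ih =>
    intro u v h
    by_cases ht : t ≤ Fintype.card A - 1
    · exact ⟨t, ht, h⟩
    · push_neg at ht
      have hpos : 1 ≤ Fintype.card A := Fintype.card_pos_iff.2 ⟨u⟩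
      have hN : Fintype.card A ≤ t := by omega
      obtain ⟨f, hf0, hft, hedge⟩ := (walkRel_iff_fun t u v).1 h
      obtain ⟨i, j, hij, hfe⟩ := Fintype.exists_ne_map_eq_of_card_lt
        (fun i : Fin (Fintype.card A + 1) => f i) (by simp)
      set i0 : ℕ := min i.val j.val with hi0
      set j0 : ℕ := max i.val j.val with hj0
      have hi0j0 : i0 < j0 := by
        rcases lt_or_gt_of_ne (fun hv => hij (Fin.ext hv) : (i:ℕ) ≠ (j:ℕ)) with h' | h' <;> omega
      have hj0t : j0 ≤ t := by
        have := i.isLt; have := j.isLt; omega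
      have hfij : f i0 = f j0 := by
        rcases le_total i.val j.val with h' | h'
        · rw [hi0, hj0, min_eq_left h', max_eq_right h']; exact hfe
        · rw [hi0, hj0, min_eq_right h', max_eq_left h']; exact hfe.symm
      set d : ℕ := j0 - i0 with hd
      have hd1 : 1 ≤ d := by omega
      have hnew : walkRel E (t - d) u v := by
        refine (walkRel_iff_fun (t-d) u v).2
          ⟨fun m => if m ≤ i0 then f m else f (m + d), by simp [hf0], ?_, ?_⟩
        · dsimp only
          by_cases hc : t - d ≤ i0
          · have h1 : t - d = i0 := by omega
            have h2 : j0 = t := by omega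
            rw [if_pos hc, h1, hfij, h2, hft]
          · rw [if_neg hc]
            have : t - d + d = t := by omega
            rw [this, hft]
        · intro m hm
          dsimp only
          rcases lt_trichotomy m i0 with hc | hc | hc
          · have h1 : m ≤ i0 := by omega
            have h2 : m + 1 ≤ i0 := by omega
            rw [if_pos h1, if_pos h2]
            exact hedge m (by omega)
          · have h2 : ¬ (m + 1 ≤ i0) := by omega
            rw [if_pos (le_of_eq hc), if_neg h2, hc, hfij]
            have : i0 + 1 + d = j0 + 1 := by omega
            rw [this]
            exact hedge j0 (by omega)
          · have h1 : ¬ (m ≤ i0) := by omega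
            have h2 : ¬ (m + 1 ≤ i0) := by omega
            rw [if_neg h1, if_neg h2]
            have : m + 1 + d = (m + d) + 1 := by omega
            rw [this]
            exact hedge (m + d) (by omega)
      exact ih (t - d) (by omega) hnew

theorem walkRel_sub {E : A → A → Prop} {f : ℕ → A} {ℓ : ℕ}
    (hedge : ∀ i < ℓ, E (f i) (f (i+1))) {i t : ℕ} (h : i + t ≤ ℓ) :
    walkRel E t (f i) (f (i + t)) := by
  induction t generalizing i with
  | zero => rfl
  | succ t ih =>
    refine walkRel_succ.2 ⟨f (i+1), hedge i (by omega), ?_⟩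
    have : i + (t+1) = (i+1) + t := by omega
    rw [this]
    exact ih (by omega)

theorem walkRel_excise {E : A → A → Prop} {f : ℕ → A} {ℓ : ℕ} {u v : A}
    (hf0 : f 0 = u) (hfl : f ℓ = v) (hedge : ∀ i < ℓ, E (f i) (f (i+1)))
    {i j : ℕ} (hij : i < j) (hjl : j ≤ ℓ) (hfij : f i = f j) :
    walkRel E (ℓ - (j - i)) u v := by
  set d : ℕ := j - i with hd
  refine (walkRel_iff_fun (ℓ - d) u v).2
    ⟨fun m => if m ≤ i then f m else f (m + d), by simp [hf0], ?_, ?_⟩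
  · dsimp only
    by_cases hc : ℓ - d ≤ i
    · have h1 : ℓ - d = i := by omega
      have h2 : j = ℓ := by omega
      rw [if_pos hc, h1, hfij, h2, hfl]
    · rw [if_neg hc]
      have : ℓ - d + d = ℓ := by omega
      rw [this, hfl]
  · intro m hm
    dsimp only
    rcases lt_trichotomy m i with hc | hc | hc
    · have h1 : m ≤ i := by omega
      have h2 : m + 1 ≤ i := by omega
      rw [if_pos h1, if_pos h2]
      exact hedge m (by omega)
    · have h2 : ¬ (m + 1 ≤ i) := by omega
      rw [if_pos (le_of_eq hc), if_neg h2, hc, hfij]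
      have : i + 1 + d = j + 1 := by omega
      rw [this]
      exact hedge j (by omega)
    · have h1 : ¬ (m ≤ i) := by omega
      have h2 : ¬ (m + 1 ≤ i) := by omega
      rw [if_neg h1, if_neg h2]
      have : m + 1 + d = (m + d) + 1 := by omega
      rw [this]
      exact hedge (m + d) (by omega)

end Walks

section Subst
variable {A : Type*}

/-- `b` occurs in `σ^m(a)`. -/
def pfReach (σ : A → List A) (m : ℕ) (a b : A) : Prop := b ∈ substPow σ m [a]

theorem pf_substWord_append (σ : A → List A) (w₁ w₂ : List A) :
    substWord σ (w₁ ++ w₂) = substWord σ w₁ ++ substWord σ w₂ :=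
  List.flatMap_append

theorem pf_substPow_append (σ : A → List A) (m : ℕ) (w₁ w₂ : List A) :
    substPow σ m (w₁ ++ w₂) = substPow σ m w₁ ++ substPow σ m w₂ := by
  induction m generalizing w₁ w₂ with
  | zero => rfl
  | succ m ih =>
    show (substWord σ)^[m+1] (w₁ ++ w₂) = _
    rw [Function.iterate_succ_apply, pf_substWord_append]
    exact ih _ _

theorem pf_substPow_nil (σ : A → List A) (m : ℕ) : substPow σ m [] = [] := by
  induction m with
  | zero => rfl
  | succ m ih =>
    show (substWord σ)^[m+1] [] = _
    rw [Function.iterate_succ_apply]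
    exact ih

theorem pf_substPow_flatMap (σ : A → List A) (m : ℕ) (w : List A) :
    substPow σ m w = w.flatMap (fun c => substPow σ m [c]) := by
  induction w with
  | nil => simp [pf_substPow_nil]
  | cons c w ih =>
    have : (c :: w) = [c] ++ w := rfl
    rw [this, pf_substPow_append, List.flatMap_append, ih]
    simp

theorem pf_mem_substPow {σ : A → List A} {m : ℕ} {w : List A} {b : A} :
    b ∈ substPow σ m w ↔ ∃ c ∈ w, b ∈ substPow σ m [c] := by
  rw [pf_substPow_flatMap, List.mem_flatMap]

theorem pf_substPow_add (σ : A → List A) (s t : ℕ) (w : List A) :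
    substPow σ (s + t) w = substPow σ t (substPow σ s w) := by
  show (substWord σ)^[s + t] w = _
  rw [Nat.add_comm, Function.iterate_add_apply]
  rfl

theorem pf_reach_zero {σ : A → List A} {a b : A} : pfReach σ 0 a b ↔ a = b := by
  constructor
  · intro h; exact (List.mem_singleton.1 h).symm
  · rintro rfl; exact List.mem_singleton.2 rfl

theorem pf_reach_add {σ : A → List A} {s t : ℕ} {a b : A} :
    pfReach σ (s + t) a b ↔ ∃ c, pfReach σ s a c ∧ pfReach σ t c b := by
  unfold pfReach
  rw [pf_substPow_add, pf_mem_substPow]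

theorem pf_walk_reach {σ : A → List A} :
    ∀ (t : ℕ) (a b : A), walkRel (pfReach σ 1) t a b ↔ pfReach σ t a b := by
  intro t
  induction t with
  | zero => intro a b; rw [walkRel_zero, pf_reach_zero]
  | succ t ih =>
    intro a b
    rw [walkRel_succ, show t + 1 = 1 + t by omega, pf_reach_add]
    exact exists_congr fun c => and_congr_right fun _ => ih c b

theorem pf_reach_one {σ : A → List A} {a b : A} : pfReach σ 1 a b ↔ b ∈ σ a := by
  unfold pfReach substPow
  rw [Function.iterate_one]
  show b ∈ [a].flatMap σ ↔ _
  simp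

theorem pf_reach_exists {σ : A → List A} (hσne : ∀ a, σ a ≠ []) (t : ℕ) (a : A) :
    ∃ b, pfReach σ t a b := by
  induction t generalizing a with
  | zero => exact ⟨a, pf_reach_zero.2 rfl⟩
  | succ t ih =>
    obtain ⟨b, hb⟩ := List.exists_mem_of_ne_nil _ (hσne a)
    obtain ⟨c, hc⟩ := ih b
    exact ⟨c, (show (1:ℕ) + t = t + 1 by omega) ▸ pf_reach_add.2 ⟨b, pf_reach_one.2 hb, hc⟩⟩

end Subst

section Wielandt
variable {A : Type*} [Fintype A] [DecidableEq A]

theorem pf_wielandt [Nonempty A] (h2 : 2 ≤ Fintype.card A) (σ : A → List A)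
    (hσne : ∀ a, σ a ≠ []) (hprim : IsPrimitiveSubst σ) :
    ∀ m : ℕ, Fintype.card A ^ 2 - 2 * Fintype.card A + 2 ≤ m →
      ∀ a b : A, b ∈ substPow σ m [a] := by
  classical
  obtain ⟨k, hkprim⟩ := hprim
  have hk' : ∀ a b : A, pfReach σ k a b := fun a b => hkprim b a
  set N := Fintype.card A with hN
  set E : A → A → Prop := pfReach σ 1 with hE
  -- k ≥ 1
  have hk1 : 1 ≤ k := by
    by_contra hc
    have hk0 : k = 0 := by omega
    have hall : ∀ a b : A, a = b := by
      intro a b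
      exact pf_reach_zero.1 (hk0 ▸ hk' a b)
    have : N ≤ 1 := Fintype.card_le_one_iff.2 fun a b => hall a b
    omega
  -- the set of closed-walk lengths
  set S : Set ℕ := {ℓ : ℕ | 1 ≤ ℓ ∧ ∃ a, pfReach σ ℓ a a} with hS
  have hSk : k ∈ S := ⟨hk1, Classical.arbitrary A, hk' _ _⟩
  set s := sInf S with hs
  have hsS : s ∈ S := Nat.sInf_mem ⟨k, hSk⟩
  have hs1 : 1 ≤ s := hsS.1
  obtain ⟨a0, ha0⟩ := hsS.2
  have hsmin : ∀ ℓ ∈ S, s ≤ ℓ := fun ℓ h => Nat.sInf_le h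
  -- divisibility claim when s ≥ N
  have hdiv : N ≤ s → ∀ ℓ : ℕ, ∀ a : A, pfReach σ ℓ a a → N ∣ ℓ := by
    intro hbig ℓ
    induction ℓ using Nat.strong_induction_on with
    | _ ℓ ih =>
      intro a ha
      rcases Nat.eq_zero_or_pos ℓ with rfl | hℓ1
      · exact dvd_zero N
      obtain ⟨f, hf0, hfl, hedge⟩ := (walkRel_iff_fun ℓ a a).1 ((pf_walk_reach ℓ a a).2 ha)
      by_cases hinj : ∀ i j : ℕ, i < ℓ → j < ℓ → f i = f j → i = j
      · -- simple cycle: its length is exactly N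
        have hle : ℓ ≤ N := by
          have : Function.Injective (fun i : Fin ℓ => f i.val) := by
            intro i j hij
            exact Fin.ext (hinj i.val j.val i.isLt j.isLt hij)
          simpa using Fintype.card_le_of_injective _ this
        have hin : ℓ ∈ S := ⟨hℓ1, a, ha⟩
        have : N ≤ ℓ := le_trans hbig (hsmin ℓ hin)
        have : ℓ = N := by omega
        simp [this]
      · push_neg at hinj
        obtain ⟨i, j, hi, hj, hfe, hne⟩ := hinj
        set i0 := min i j with hi0
        set j0 := max i j with hj0
        have hij : i0 < j0 := by
          rcases lt_or_gt_of_ne hne with h' | h' <;> omega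
        have hj0ℓ : j0 < ℓ := by omega
        have hfij : f i0 = f j0 := by
          rcases le_total i j with h' | h'
          · rw [hi0, hj0, min_eq_left h', max_eq_right h']; exact hfe
          · rw [hi0, hj0, min_eq_right h', max_eq_left h']; exact hfe.symm
        -- inner closed walk of length j0 - i0
        have hw1 : pfReach σ (j0 - i0) (f i0) (f i0) := by
          have := walkRel_sub (E := E) hedge (i := i0) (t := j0 - i0) (by omega)
          rw [show i0 + (j0 - i0) = j0 by omega] at this
          rw [← hfij] at this
          exact (pf_walk_reach _ _ _).1 this
        -- outer closed walk
        have hw2 : pfReach σ (ℓ - (j0 - i0)) a a :=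
          (pf_walk_reach _ _ _).1 (walkRel_excise hf0 hfl hedge hij (by omega) hfij)
        have d1 : N ∣ (j0 - i0) := ih _ (by omega) _ hw1
        have d2 : N ∣ (ℓ - (j0 - i0)) := ih _ (by omega) _ hw2
        have : ℓ = (j0 - i0) + (ℓ - (j0 - i0)) := by omega
        rw [this]
        exact dvd_add d1 d2
  -- s ≤ N - 1
  have hsN : s ≤ N - 1 := by
    by_contra hc
    have hbig : N ≤ s := by omega
    obtain ⟨c, hc1, hc2⟩ :=
      pf_reach_add.1 ((show (k - 1) + 1 = k by omega) ▸ hk' a0 a0)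
    have hcl1 : pfReach σ (k + 1) a0 a0 :=
      pf_reach_add.2 ⟨c, hk' a0 c, hc2⟩
    have d1 : N ∣ k := hdiv hbig k a0 (hk' a0 a0)
    have d2 : N ∣ (k + 1) := hdiv hbig (k + 1) a0 hcl1
    have hd : N ∣ 1 := by
      have := Nat.dvd_sub d2 d1
      simpa using this
    have := Nat.le_of_dvd Nat.one_pos hd
    omega
  -- the cycle function
  obtain ⟨f, hf0, hfs, hedge⟩ := (walkRel_iff_fun s a0 a0).1 ((pf_walk_reach s a0 a0).2 ha0)
  set g : ℕ → A := fun i => f (i % s) with hg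
  have hgedge : ∀ i, E (g i) (g (i + 1)) := by
    intro i
    have hmod : i % s < s := Nat.mod_lt i (by omega)
    have hkey : (i + 1) % s = (i % s + 1) % s := (Nat.mod_add_mod i s 1).symm
    by_cases hend : i % s + 1 = s
    · have h1 : (i + 1) % s = 0 := by rw [hkey, hend, Nat.mod_self]
      show E (f (i % s)) (f ((i + 1) % s))
      rw [h1, hf0, ← hfs]
      have := hedge (i % s) hmod
      rwa [hend] at this
    · have h1 : (i + 1) % s = i % s + 1 := by
        rw [hkey]; exact Nat.mod_eq_of_lt (by omega)
      show E (f (i % s)) (f ((i + 1) % s))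
      rw [h1]
      exact hedge (i % s) hmod
  have hgper : ∀ i, g (i + s) = g i := by
    intro i; show f ((i + s) % s) = f (i % s); rw [Nat.add_mod_right]
  have hgcyc : ∀ i, pfReach σ s (g i) (g i) := by
    intro i
    have := walkRel_of_fun hgedge s i
    rw [show i + s = i + s from rfl, hgper i] at this
    exact (pf_walk_reach _ _ _).1 this
  -- g is injective on [0, s)
  have hginj : ∀ i j : ℕ, i < s → j < s → g i = g j → i = j := by
    intro i j hi hj hgij
    by_contra hne
    have hgi : g i = f i := by show f (i % s) = f i; rw [Nat.mod_eq_of_lt hi]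
    have hgj : g j = f j := by show f (j % s) = f j; rw [Nat.mod_eq_of_lt hj]
    set i0 := min i j with hi0
    set j0 := max i j with hj0
    have hij0 : i0 < j0 := by rcases lt_or_gt_of_ne hne with h' | h' <;> omega
    have hfij : f i0 = f j0 := by
      rcases le_total i j with h' | h'
      · rw [hi0, hj0, min_eq_left h', max_eq_right h', ← hgi, ← hgj]; exact hgij
      · rw [hi0, hj0, min_eq_right h', max_eq_left h', ← hgi, ← hgj]; exact hgij.symm
    have hw : pfReach σ (j0 - i0) (f i0) (f i0) := by
      have := walkRel_sub (E := E) hedge (i := i0) (t := j0 - i0) (by omega)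
      rw [show i0 + (j0 - i0) = j0 by omega, ← hfij] at this
      exact (pf_walk_reach _ _ _).1 this
    have : s ≤ j0 - i0 := hsmin _ ⟨by omega, f i0, hw⟩
    omega
  -- the cycle vertex set
  set W : Finset A := (Finset.range s).image g with hW
  have hWcard : W.card = s := by
    rw [hW, Finset.card_image_of_injOn, Finset.card_range]
    intro i hi j hj hgij
    exact hginj i j (Finset.mem_range.1 hi) (Finset.mem_range.1 hj) hgij
  -- shortened connectivity
  have hconn : ∀ a b : A, ∃ e, e ≤ N - 1 ∧ pfReach σ e a b := by
    intro a b
    obtain ⟨e, he, hw⟩ := walkRel_shorten k ((pf_walk_reach k a b).2 (hk' a b))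
    exact ⟨e, he, (pf_walk_reach _ _ _).1 hw⟩
  -- leg 1 : from any a, reach a cycle vertex in exactly N - s steps
  have hleg1 : ∀ a : A, ∃ w : A, pfReach σ (N - s) a w ∧ pfReach σ s w w := by
    intro a
    set T : Set ℕ := {t : ℕ | ∃ i, pfReach σ t a (g i)} with hT
    have hTne : T.Nonempty := by
      obtain ⟨e, _, hw⟩ := hconn a (g 0)
      exact ⟨e, 0, hw⟩
    set t0 := sInf T with ht0
    obtain ⟨i, hi⟩ : ∃ i, pfReach σ t0 a (g i) := Nat.sInf_mem hTne
    have ht0min : ∀ t ∈ T, t0 ≤ t := fun t h => Nat.sInf_le h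
    -- walk function for leg 1
    obtain ⟨h, hh0, hht, hhedge⟩ := (walkRel_iff_fun t0 a (g i)).1 ((pf_walk_reach _ _ _).2 hi)
    -- intermediate vertices are outside W
    have hout : ∀ m, m < t0 → h m ∉ W := by
      intro m hm hmem
      obtain ⟨i', _, hgi'⟩ := Finset.mem_image.1 hmem
      have : pfReach σ m a (g i') := by
        have := walkRel_sub (E := E) hhedge (i := 0) (t := m) (by omega)
        rw [Nat.zero_add, hh0, ← hgi'] at this
        exact (pf_walk_reach _ _ _).1 this
      have : t0 ≤ m := ht0min m ⟨i', this⟩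
      omega
    -- h is injective on [0, t0)
    have hhinj : ∀ m1 m2 : ℕ, m1 < t0 → m2 < t0 → h m1 = h m2 → m1 = m2 := by
      intro m1 m2 hm1 hm2 heq
      by_contra hne
      set i0 := min m1 m2 with hi0
      set j0 := max m1 m2 with hj0
      have hij0 : i0 < j0 := by rcases lt_or_gt_of_ne hne with h' | h' <;> omega
      have hfij : h i0 = h j0 := by
        rcases le_total m1 m2 with h' | h'
        · rw [hi0, hj0, min_eq_left h', max_eq_right h']; exact heq
        · rw [hi0, hj0, min_eq_right h', max_eq_left h']; exact heq.symm
      have hw : walkRel E (t0 - (j0 - i0)) a (g i) :=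
        walkRel_excise hh0 hht hhedge hij0 (by omega) hfij
      have : t0 ≤ t0 - (j0 - i0) := ht0min _ ⟨i, (pf_walk_reach _ _ _).1 hw⟩
      omega
    -- count: t0 ≤ N - s
    have ht0le : t0 ≤ N - s := by
      set U : Finset A := (Finset.range t0).image h with hU
      have hUcard : U.card = t0 := by
        rw [hU, Finset.card_image_of_injOn, Finset.card_range]
        intro x hx y hy hxy
        exact hhinj x y (Finset.mem_range.1 hx) (Finset.mem_range.1 hy) hxy
      have hdisj : Disjoint U W := by
        rw [Finset.disjoint_left]
        intro x hx hxW
        obtain ⟨m, hm, hmx⟩ := Finset.mem_image.1 hx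
        exact hout m (Finset.mem_range.1 hm) (hmx ▸ hxW)
      have : U.card + W.card ≤ N := by
        rw [← Finset.card_union_of_disjoint hdisj]
        exact le_trans (Finset.card_le_univ _) (le_of_eq (Finset.card_univ))
      omega
    -- pad along the cycle
    refine ⟨g (i + (N - s - t0)), ?_, hgcyc _⟩
    have hpad : pfReach σ (N - s - t0) (g i) (g (i + (N - s - t0))) :=
      (pf_walk_reach _ _ _).1 (walkRel_of_fun hgedge (N - s - t0) i)
    have := pf_reach_add.2 ⟨g i, hi, hpad⟩
    rwa [show t0 + (N - s - t0) = N - s by omega] at this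
  -- leg 2 : from any cycle vertex, reach anything in exactly s * (N-1) steps
  have hleg2 : ∀ w b : A, pfReach σ s w w → pfReach σ (s * (N - 1)) w b := by
    intro w b hww
    set Es : A → A → Prop := pfReach σ s with hEs
    have hwalk_s : ∀ (t : ℕ) (u v : A), walkRel Es t u v ↔ pfReach σ (s * t) u v := by
      intro t
      induction t with
      | zero => intro u v; rw [Nat.mul_zero, walkRel_zero, pf_reach_zero]
      | succ t ih =>
        intro u v
        rw [walkRel_succ, show s * (t + 1) = s + s * t by ring, pf_reach_add]
        exact exists_congr fun c => and_congr_right fun _ => ih c v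
    -- closed k-multiples
    have hclosed : ∀ (v : A) (t : ℕ), pfReach σ (k * t) v v := by
      intro v t
      induction t with
      | zero => exact pf_reach_zero.2 rfl
      | succ t ih =>
        rw [show k * (t + 1) = k + k * t by ring]
        exact pf_reach_add.2 ⟨v, hk' v v, ih⟩
    have hks : pfReach σ (s * k) w b := by
      rw [show s * k = k * s by ring, show k * s = k + k * (s - 1) by
        have : s = 1 + (s - 1) := by omega
        calc k * s = k * (1 + (s - 1)) := by rw [← this]
        _ = k + k * (s - 1) := by ring]
      exact pf_reach_add.2 ⟨b, hk' w b, hclosed b (s - 1)⟩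
    have hwb : walkRel Es k w b := (hwalk_s k w b).2 hks
    obtain ⟨e, he, hew⟩ := walkRel_shorten k hwb
    have hpad : walkRel Es ((N - 1 - e) + e) w b := walkRel_pad hww hew _
    rw [show (N - 1 - e) + e = N - 1 by omega] at hpad
    exact (hwalk_s _ _ _).1 hpad
  -- combine
  have hL : ∀ a b : A, pfReach σ ((N - s) + s * (N - 1)) a b := by
    intro a b
    obtain ⟨w, h1, h2⟩ := hleg1 a
    exact pf_reach_add.2 ⟨w, h1, hleg2 w b h2⟩
  -- arithmetic : L ≤ n₀
  have harith : (N - s) + s * (N - 1) ≤ N ^ 2 - 2 * N + 2 := by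
    obtain ⟨M, hM⟩ : ∃ M, N = M + 2 := ⟨N - 2, by omega⟩
    set t := s - 1 with ht
    have htM : t ≤ M := by omega
    have hNsq : N ^ 2 = M * M + 4 * M + 4 := by rw [hM]; ring
    have hmul : s * (N - 1) = t * M + t + M + 1 := by
      rw [show N - 1 = M + 1 by omega, show s = t + 1 by omega]; ring
    have e5 : t * M ≤ M * M := Nat.mul_le_mul_right _ htM
    omega
  -- conclusion
  intro m hm a b
  have hmL : (N - s) + s * (N - 1) ≤ m := le_trans harith hm
  obtain ⟨c, hc⟩ := pf_reach_exists hσne (m - ((N - s) + s * (N - 1))) a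
  have := pf_reach_add.2 ⟨c, hc, hL c b⟩
  rwa [show m - ((N - s) + s * (N - 1)) + ((N - s) + s * (N - 1)) = m by omega] at this

end Wielandt

section Count
variable {A : Type*} [Fintype A] [DecidableEq A]

theorem pf_count_cons (a b : A) (w : List A) :
    (a :: w).count b = w.count b + if b = a then 1 else 0 := by
  rw [List.count_cons]
  congr 1
  simp only [beq_iff_eq]
  by_cases h : b = a
  · rw [if_pos h.symm, if_pos h]
  · rw [if_neg (fun hh => h hh.symm), if_neg h]

theorem pf_count_substWord (σ : A → List A) (w : List A) (c : A) :
    (substWord σ w).count c = ∑ b, w.count b * (σ b).count c := by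
  induction w with
  | nil => simp [substWord]
  | cons a w ih =>
    have h1 : substWord σ (a :: w) = σ a ++ substWord σ w := rfl
    rw [h1, List.count_append, ih]
    have h2 : ∀ b : A, (a :: w).count b * (σ b).count c
        = w.count b * (σ b).count c + (if b = a then (σ b).count c else 0) := by
      intro b
      rw [pf_count_cons, add_mul]
      congr 1
      split <;> simp
    rw [Finset.sum_congr rfl fun b _ => h2 b, Finset.sum_add_distrib,
      Finset.sum_ite_eq' Finset.univ a fun b => (σ b).count c]
    simp [Nat.add_comm]

theorem pf_length_eq_sum_count (l : List A) [Nonempty A] : l.length = ∑ c, l.count c := by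
  induction l with
  | nil => simp
  | cons a l ih =>
    rw [List.length_cons, ih]
    rw [Finset.sum_congr rfl fun b _ => pf_count_cons a b l, Finset.sum_add_distrib,
      Finset.sum_ite_eq' Finset.univ a fun _ => 1]
    simp

variable [Nonempty A]

theorem pf_pow_apply (σ : A → List A) : ∀ (m : ℕ) (a c : A),
    ((incMatrixR σ) ^ m) a c = ((substPow σ m [a]).count c : ℝ) := by
  intro m
  induction m with
  | zero =>
    intro a c
    rw [pow_zero]
    show (1 : Matrix A A ℝ) a c = _
    rw [Matrix.one_apply]
    rcases eq_or_ne a c with rfl | hne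
    · simp [substPow]
    · rw [if_neg hne]
      have : c ∉ substPow σ 0 [a] := by
        intro h
        exact hne (List.mem_singleton.1 h).symm
      rw [List.count_eq_zero_of_not_mem this]
      simp
  | succ m ih =>
    intro a c
    rw [pow_succ, Matrix.mul_apply]
    simp only [ih]
    have hsub : substPow σ (m+1) [a] = substWord σ (substPow σ m [a]) :=
      Function.iterate_succ_apply' _ _ _
    rw [hsub, pf_count_substWord]
    push_cast
    rfl

theorem pf_vecMul_single_pow (σ : A → List A) (m : ℕ) (a : A) :
    Matrix.vecMul (Pi.single a 1) ((incMatrixR σ) ^ m)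
      = fun c => ((substPow σ m [a]).count c : ℝ) := by
  rw [Matrix.single_one_vecMul]
  funext c
  exact pf_pow_apply σ m a c

end Count

section PM
variable {A : Type*} [Fintype A] [Nonempty A] [DecidableEq A]

theorem pf_inf'_pos {x y : A → ℝ} (hx : ∀ a, 0 < x a) (hy : ∀ a, 0 < y a) :
    0 < Finset.univ.inf' Finset.univ_nonempty fun a => x a / y a :=
  (Finset.lt_inf'_iff _).2 fun a _ => div_pos (hx a) (hy a)

theorem pf_inf'_le_sup' (f : A → ℝ) :
    (Finset.univ.inf' Finset.univ_nonempty f) ≤ Finset.univ.sup' Finset.univ_nonempty f := by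
  have a := Classical.arbitrary A
  exact le_trans (Finset.inf'_le f (Finset.mem_univ a)) (Finset.le_sup' f (Finset.mem_univ a))

theorem pf_sup'_pos {x y : A → ℝ} (hx : ∀ a, 0 < x a) (hy : ∀ a, 0 < y a) :
    0 < Finset.univ.sup' Finset.univ_nonempty fun a => x a / y a :=
  lt_of_lt_of_le (pf_inf'_pos hx hy) (pf_inf'_le_sup' _)

theorem pf_pm_nonneg {x y : A → ℝ} (hx : ∀ a, 0 < x a) (hy : ∀ a, 0 < y a) :
    0 ≤ projMetric x y :=
  Real.log_nonneg ((one_le_div (pf_inf'_pos hx hy)).2 (pf_inf'_le_sup' _))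

theorem pf_sup'_div_const (f : A → ℝ) {c : ℝ} (hc : 0 < c) :
    (Finset.univ.sup' Finset.univ_nonempty fun a : A => f a / c)
      = (Finset.univ.sup' Finset.univ_nonempty f) / c := by
  apply _root_.le_antisymm
  · exact Finset.sup'_le _ _ fun a _ =>
      div_le_div_of_nonneg_right (Finset.le_sup' f (Finset.mem_univ a)) (le_of_lt hc) |>.trans_eq rfl
  · rw [div_le_iff₀ hc]
    apply Finset.sup'_le _ _ fun a _ => ?_
    rw [← div_le_iff₀ hc]
    exact Finset.le_sup' (fun a => f a / c) (Finset.mem_univ a)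

theorem pf_inf'_div_const (f : A → ℝ) {c : ℝ} (hc : 0 < c) :
    (Finset.univ.inf' Finset.univ_nonempty fun a : A => f a / c)
      = (Finset.univ.inf' Finset.univ_nonempty f) / c := by
  apply _root_.le_antisymm
  · rw [le_div_iff₀ hc]
    apply Finset.le_inf' _ _ fun a _ => ?_
    rw [← le_div_iff₀ hc]
    exact Finset.inf'_le (fun a => f a / c) (Finset.mem_univ a)
  · exact Finset.le_inf' _ _ fun a _ =>
      div_le_div_of_nonneg_right (Finset.inf'_le f (Finset.mem_univ a)) (le_of_lt hc)

theorem pf_pm_smul_right {x y : A → ℝ} {c : ℝ} (hc : 0 < c) :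
    projMetric x (c • y) = projMetric x y := by
  unfold projMetric
  have h1 : (fun a => x a / (c • y) a) = fun a => (x a / y a) / c := by
    funext a
    rw [Pi.smul_apply, smul_eq_mul, div_div, mul_comm, ← div_div]
  rw [h1, pf_sup'_div_const _ hc, pf_inf'_div_const _ hc, div_div_div_comm,
    div_self (ne_of_gt hc), div_one]

theorem pf_pm_self {x : A → ℝ} (hx : ∀ a, 0 < x a) : projMetric x x = by
  exact 0 := by
  unfold projMetric
  have h1 : (fun a => x a / x a) = fun _ : A => (1:ℝ) := by
    funext a; rw [div_self (ne_of_gt (hx a))]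
  rw [h1, Finset.sup'_const, Finset.inf'_const, div_one, Real.log_one]

theorem pf_vecMul_apply (x : A → ℝ) (P : Matrix A A ℝ) (c : A) :
    Matrix.vecMul x P c = ∑ b, x b * P b c := rfl

theorem pf_vecMul_pos {x : A → ℝ} {P : Matrix A A ℝ} (hx : ∀ a, 0 < x a)
    (hP : ∀ a b, 0 < P a b) (c : A) : 0 < Matrix.vecMul x P c := by
  rw [pf_vecMul_apply]
  exact Finset.sum_pos (fun b _ => mul_pos (hx b) (hP b c)) Finset.univ_nonempty

theorem pf_weak_contraction {x y : A → ℝ} {P : Matrix A A ℝ}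
    (hx : ∀ a, 0 < x a) (hy : ∀ a, 0 < y a) (hP : ∀ a b, 0 < P a b) :
    projMetric (Matrix.vecMul x P) (Matrix.vecMul y P) ≤ projMetric x y := by
  set S := Finset.univ.sup' Finset.univ_nonempty fun a => x a / y a with hS
  set I := Finset.univ.inf' Finset.univ_nonempty fun a => x a / y a with hI
  have hIpos : 0 < I := pf_inf'_pos hx hy
  have hIS : I ≤ S := pf_inf'_le_sup' _
  have hup : ∀ c, Matrix.vecMul x P c ≤ S * Matrix.vecMul y P c := by
    intro c
    rw [pf_vecMul_apply, pf_vecMul_apply, Finset.mul_sum]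
    apply Finset.sum_le_sum
    intro b _
    rw [← mul_assoc]
    apply mul_le_mul_of_nonneg_right _ (le_of_lt (hP b c))
    rw [← div_le_iff₀ (hy b), hS]
    exact Finset.le_sup' (fun a => x a / y a) (Finset.mem_univ b)
  have hlo : ∀ c, I * Matrix.vecMul y P c ≤ Matrix.vecMul x P c := by
    intro c
    rw [pf_vecMul_apply, pf_vecMul_apply, Finset.mul_sum]
    apply Finset.sum_le_sum
    intro b _
    rw [← mul_assoc]
    apply mul_le_mul_of_nonneg_right _ (le_of_lt (hP b c))
    rw [← le_div_iff₀ (hy b), hI]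
    exact Finset.inf'_le (fun a => x a / y a) (Finset.mem_univ b)
  have hxP : ∀ c, 0 < Matrix.vecMul x P c := pf_vecMul_pos hx hP
  have hyP : ∀ c, 0 < Matrix.vecMul y P c := pf_vecMul_pos hy hP
  have hS' : (Finset.univ.sup' Finset.univ_nonempty fun c =>
      Matrix.vecMul x P c / Matrix.vecMul y P c) ≤ S := by
    apply Finset.sup'_le _ _ fun c _ => ?_
    rw [div_le_iff₀ (hyP c)]
    exact hup c
  have hI' : I ≤ Finset.univ.inf' Finset.univ_nonempty fun c =>
      Matrix.vecMul x P c / Matrix.vecMul y P c := by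
    apply Finset.le_inf' _ _ fun c _ => ?_
    rw [le_div_iff₀ (hyP c)]
    exact hlo c
  unfold projMetric
  have hI'pos : 0 < Finset.univ.inf' Finset.univ_nonempty fun c =>
      Matrix.vecMul x P c / Matrix.vecMul y P c := pf_inf'_pos hxP hyP
  have hS'pos : 0 < Finset.univ.sup' Finset.univ_nonempty fun c =>
      Matrix.vecMul x P c / Matrix.vecMul y P c := pf_sup'_pos hxP hyP
  apply Real.log_le_log (div_pos hS'pos hI'pos)
  exact div_le_div₀ (le_of_lt (lt_of_lt_of_le hIpos hIS)) hS' hIpos hI'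
end PM

section PM2
variable {A : Type*} [Fintype A] [Nonempty A] [DecidableEq A]

theorem pf_birkhoff_nonneg (P : Matrix A A ℝ) (hP : ∀ a b, 0 < P a b) : 0 ≤ birkhoff P := by
  apply Real.sSup_nonneg
  rintro r ⟨x, y, hx, hy, _, rfl⟩
  exact div_nonneg (pf_pm_nonneg (pf_vecMul_pos hx hP) (pf_vecMul_pos hy hP)) (pf_pm_nonneg hx hy)

theorem pf_birkhoff_bddAbove (P : Matrix A A ℝ) (hP : ∀ a b, 0 < P a b) :
    BddAbove { r | ∃ x y : A → ℝ, (∀ a, 0 < x a) ∧ (∀ a, 0 < y a) ∧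
      LinearIndependent ℝ ![x, y] ∧
      r = projMetric (Matrix.vecMul x P) (Matrix.vecMul y P) / projMetric x y } := by
  refine ⟨1, ?_⟩
  rintro r ⟨x, y, hx, hy, _, rfl⟩
  rcases eq_or_lt_of_le (pf_pm_nonneg hx hy) with h0 | hpos
  · rw [← h0, div_zero]; norm_num
  · rw [div_le_one hpos]
    exact pf_weak_contraction hx hy hP

theorem pf_contraction {x y : A → ℝ} {P : Matrix A A ℝ}
    (hx : ∀ a, 0 < x a) (hy : ∀ a, 0 < y a) (hP : ∀ a b, 0 < P a b) :
    projMetric (Matrix.vecMul x P) (Matrix.vecMul y P) ≤ birkhoff P * projMetric x y := by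
  rcases eq_or_lt_of_le (pf_pm_nonneg hx hy) with h0 | hpos
  · rw [← h0, mul_zero]
    have h1 : projMetric (Matrix.vecMul x P) (Matrix.vecMul y P) ≤ 0 :=
      le_trans (pf_weak_contraction hx hy hP) (le_of_eq h0.symm)
    exact h1
  · by_cases hli : LinearIndependent ℝ ![x, y]
    · have hmem : projMetric (Matrix.vecMul x P) (Matrix.vecMul y P) / projMetric x y
          ∈ { r | ∃ x y : A → ℝ, (∀ a, 0 < x a) ∧ (∀ a, 0 < y a) ∧
            LinearIndependent ℝ ![x, y] ∧
            r = projMetric (Matrix.vecMul x P) (Matrix.vecMul y P) / projMetric x y } :=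
        ⟨x, y, hx, hy, hli, rfl⟩
      have hle := le_csSup (pf_birkhoff_bddAbove P hP) hmem
      calc projMetric (Matrix.vecMul x P) (Matrix.vecMul y P)
          = (projMetric (Matrix.vecMul x P) (Matrix.vecMul y P) / projMetric x y)
            * projMetric x y := (div_mul_cancel₀ _ (ne_of_gt hpos)).symm
        _ ≤ birkhoff P * projMetric x y :=
            mul_le_mul_of_nonneg_right hle (le_of_lt hpos)
    · exfalso
      rw [LinearIndependent.pair_iff] at hli
      push_neg at hli
      obtain ⟨s, t, hst, hne⟩ := hli
      have a₀ := Classical.arbitrary A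
      by_cases ht : t = 0
      · subst ht
        have hs : s ≠ 0 := by tauto
        have := congrFun hst a₀
        simp only [Pi.add_apply, Pi.smul_apply, Pi.zero_apply, smul_eq_mul, mul_zero,
          zero_smul, add_zero, zero_mul] at this
        have : s * x a₀ = 0 := by simpa using this
        rcases mul_eq_zero.1 this with h | h
        · exact hs h
        · exact ne_of_gt (hx a₀) h
      · have hyx : y = (-s/t) • x := by
          funext a
          have := congrFun hst a
          simp only [Pi.add_apply, Pi.smul_apply, Pi.zero_apply, smul_eq_mul] at this ⊢
          field_simp
          linarith
        have hc : 0 < -s/t := by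
          have := hyx ▸ hy a₀
          have h2 : (-s/t) * x a₀ = y a₀ := by rw [hyx]; simp
          nlinarith [hy a₀, hx a₀, h2]
        have : projMetric x y = 0 := by
          rw [hyx, pf_pm_smul_right hc, pf_pm_self hx]
        exact ne_of_gt hpos this

theorem pf_convex {P : Matrix A A ℝ} (hP : ∀ a b, 0 < P a b) {α : A → ℝ}
    (hα : ∀ a, 0 < α a) {v : A → ℝ} (hv : ∀ a, 0 ≤ v a) {d₀ : A} (hd₀ : 0 < v d₀) :
    projMetric (Matrix.vecMul v P) α ≤
      Finset.univ.sup' Finset.univ_nonempty fun d =>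
        projMetric (Matrix.vecMul (Pi.single d 1) P) α := by
  classical
  set S : A → ℝ := fun d => Finset.univ.sup' Finset.univ_nonempty fun c => P d c / α c with hSdef
  set I : A → ℝ := fun d => Finset.univ.inf' Finset.univ_nonempty fun c => P d c / α c with hIdef
  have hIpos : ∀ d, 0 < I d := fun d => pf_inf'_pos (fun c => hP d c) hα
  have hSpos : ∀ d, 0 < S d := fun d => pf_sup'_pos (fun c => hP d c) hα
  have hrow : ∀ d, projMetric (Matrix.vecMul (Pi.single d 1) P) α = Real.log (S d / I d) := by
    intro d
    rw [Matrix.single_one_vecMul]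
    rfl
  -- bounds on the entries of vP
  have hvP : ∀ c, Matrix.vecMul v P c = ∑ d, v d * P d c := fun c => pf_vecMul_apply v P c
  have hub : ∀ c, Matrix.vecMul v P c ≤ (∑ d, v d * S d) * α c := by
    intro c
    rw [hvP, Finset.sum_mul]
    apply Finset.sum_le_sum
    intro d _
    rw [mul_assoc]
    apply mul_le_mul_of_nonneg_left _ (hv d)
    rw [← div_le_iff₀ (hα c)]
    exact Finset.le_sup' (fun c => P d c / α c) (Finset.mem_univ c)
  have hlb : ∀ c, (∑ d, v d * I d) * α c ≤ Matrix.vecMul v P c := by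
    intro c
    rw [hvP, Finset.sum_mul]
    apply Finset.sum_le_sum
    intro d _
    rw [mul_assoc]
    apply mul_le_mul_of_nonneg_left _ (hv d)
    rw [← le_div_iff₀ (hα c)]
    exact Finset.inf'_le (fun c => P d c / α c) (Finset.mem_univ c)
  have hsumI : 0 < ∑ d, v d * I d :=
    Finset.sum_pos' (fun d _ => mul_nonneg (hv d) (le_of_lt (hIpos d)))
      ⟨d₀, Finset.mem_univ d₀, mul_pos hd₀ (hIpos d₀)⟩
  have hsumS : 0 < ∑ d, v d * S d :=
    Finset.sum_pos' (fun d _ => mul_nonneg (hv d) (le_of_lt (hSpos d)))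
      ⟨d₀, Finset.mem_univ d₀, mul_pos hd₀ (hSpos d₀)⟩
  have hvPpos : ∀ c, 0 < Matrix.vecMul v P c :=
    fun c => lt_of_lt_of_le (mul_pos hsumI (hα c)) (hlb c)
  -- sup and inf of ratios
  have hS' : (Finset.univ.sup' Finset.univ_nonempty fun c => Matrix.vecMul v P c / α c)
      ≤ ∑ d, v d * S d := by
    apply Finset.sup'_le _ _ fun c _ => ?_
    rw [div_le_iff₀ (hα c)]
    exact hub c
  have hI' : (∑ d, v d * I d)
      ≤ Finset.univ.inf' Finset.univ_nonempty fun c => Matrix.vecMul v P c / α c := by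
    apply Finset.le_inf' _ _ fun c _ => ?_
    rw [le_div_iff₀ (hα c)]
    exact hlb c
  -- the maximal row ratio
  obtain ⟨dm, _, hdm⟩ := Finset.exists_mem_eq_sup' (Finset.univ_nonempty (α := A))
    (fun d => S d / I d)
  have hQpos : 0 < S dm / I dm := div_pos (hSpos dm) (hIpos dm)
  have hQle : (∑ d, v d * S d) ≤ (S dm / I dm) * (∑ d, v d * I d) := by
    rw [Finset.mul_sum]
    apply Finset.sum_le_sum
    intro d _
    rw [← mul_assoc, mul_comm (S dm / I dm) (v d), mul_assoc]
    apply mul_le_mul_of_nonneg_left _ (hv d)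
    rw [← div_le_iff₀ (hIpos d), ← hdm]
    exact Finset.le_sup' (fun d => S d / I d) (Finset.mem_univ d)
  -- put things together
  have hstep1 : projMetric (Matrix.vecMul v P) α ≤ Real.log (S dm / I dm) := by
    unfold projMetric
    have h1 : (Finset.univ.sup' Finset.univ_nonempty fun c => Matrix.vecMul v P c / α c) /
        (Finset.univ.inf' Finset.univ_nonempty fun c => Matrix.vecMul v P c / α c)
          ≤ S dm / I dm := by
      rw [div_le_iff₀ (pf_inf'_pos hvPpos hα)]
      calc (Finset.univ.sup' Finset.univ_nonempty fun c => Matrix.vecMul v P c / α c)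
          ≤ ∑ d, v d * S d := hS'
        _ ≤ (S dm / I dm) * (∑ d, v d * I d) := hQle
        _ ≤ (S dm / I dm) *
            (Finset.univ.inf' Finset.univ_nonempty fun c => Matrix.vecMul v P c / α c) :=
            mul_le_mul_of_nonneg_left hI' (le_of_lt hQpos)
    exact Real.log_le_log (div_pos (pf_sup'_pos hvPpos hα) (pf_inf'_pos hvPpos hα)) h1
  refine le_trans hstep1 ?_
  rw [← hrow dm]
  exact Finset.le_sup' (fun d => projMetric (Matrix.vecMul (Pi.single d 1) P) α)
    (Finset.mem_univ dm)

theorem pf_freq {x : A → ℝ} (hx : ∀ a, 0 < x a) {α : A → ℝ} (hα : ∀ a, 0 < α a) (c : A) :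
    |x c / (∑ a, x a) - α c / (∑ a, α a)| ≤ Real.exp (projMetric x α) - 1 := by
  set S := Finset.univ.sup' Finset.univ_nonempty fun a => x a / α a with hS
  set I := Finset.univ.inf' Finset.univ_nonempty fun a => x a / α a with hI
  have hIpos : 0 < I := pf_inf'_pos hx hα
  have hSpos : 0 < S := pf_sup'_pos hx hα
  have hIS : I ≤ S := pf_inf'_le_sup' _
  have hexp : Real.exp (projMetric x α) = S / I := Real.exp_log (div_pos hSpos hIpos)
  have hxc : ∀ a, x a ≤ S * α a := by
    intro a
    rw [← div_le_iff₀ (hα a), hS]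
    exact Finset.le_sup' (fun a => x a / α a) (Finset.mem_univ a)
  have hxc' : ∀ a, I * α a ≤ x a := by
    intro a
    rw [← le_div_iff₀ (hα a), hI]
    exact Finset.inf'_le (fun a => x a / α a) (Finset.mem_univ a)
  have hsx : 0 < ∑ a, x a := Finset.sum_pos (fun a _ => hx a) Finset.univ_nonempty
  have hsα : 0 < ∑ a, α a := Finset.sum_pos (fun a _ => hα a) Finset.univ_nonempty
  have hsums : I * (∑ a, α a) ≤ ∑ a, x a := by
    rw [Finset.mul_sum]
    exact Finset.sum_le_sum fun a _ => hxc' a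
  have hsums' : (∑ a, x a) ≤ S * (∑ a, α a) := by
    rw [Finset.mul_sum]
    exact Finset.sum_le_sum fun a _ => hxc a
  set β := α c / (∑ a, α a) with hβ
  have hβpos : 0 < β := div_pos (hα c) hsα
  have hβ1 : β ≤ 1 := by
    rw [hβ, div_le_one hsα]
    exact Finset.single_le_sum (fun a _ => le_of_lt (hα a)) (Finset.mem_univ c)
  have hup : x c / (∑ a, x a) ≤ (S / I) * β := by
    calc x c / (∑ a, x a) ≤ (S * α c) / (I * (∑ a, α a)) :=
          div_le_div₀ (mul_nonneg (le_of_lt hSpos) (le_of_lt (hα c))) (hxc c)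
            (mul_pos hIpos hsα) hsums
      _ = (S / I) * β := by rw [hβ, mul_div_mul_comm]
  have hlo : (I / S) * β ≤ x c / (∑ a, x a) := by
    calc (I / S) * β = (I * α c) / (S * (∑ a, α a)) := by rw [hβ, mul_div_mul_comm]
      _ ≤ x c / (∑ a, x a) :=
          div_le_div₀ (le_of_lt (hx c)) (hxc' c) hsx hsums'
  have hr : 1 ≤ S / I := (one_le_div hIpos).2 hIS
  have hr' : I / S ≤ 1 := (div_le_one hSpos).2 hIS
  have hr'pos : 0 < I / S := div_pos hIpos hSpos
  have hrr : (S / I) * (I / S) = 1 := by field_simp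
  rw [hexp, abs_sub_le_iff]
  constructor
  · nlinarith [hup, hβ1, hβpos, hr]
  · nlinarith [hlo, hβ1, hβpos, hr, hr', hr'pos, hrr]

end PM2

section Main
variable {A : Type*} [Fintype A] [Nonempty A] [DecidableEq A]

theorem pf_exp_rpow (D t : ℝ) : (Real.exp D) ^ t = Real.exp (D * t) := by
  rw [Real.rpow_def_of_pos (Real.exp_pos D), Real.log_exp]

end Main

/-- Inequality (4.5): for `n ≥ 2n₀` and all letters `a, b, c`,
`| |σⁿ(a)|_c/|σⁿ(a)| − |σⁿ(b)|_c/|σⁿ(b)| | ≤ 2 exp(max_b d(e_b M^{n₀}, α))^{τ_B(M^{n₀})^{⌊n/n₀⌋−1}} − 2`. -/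
theorem stmt_12 (A : Type*) [Fintype A] [DecidableEq A] [Nonempty A]
    (h2 : 2 ≤ Fintype.card A)
    (σ : A → List A) (hσne : ∀ a, σ a ≠ [])
    (hprim : IsPrimitiveSubst σ)
    (lam : ℝ) (α : A → ℝ) (hα : ∀ a, 0 < α a)
    (heig : Matrix.vecMul α (incMatrixR σ) = lam • α)
    (n₀ : ℕ) (hn₀ : n₀ = Fintype.card A ^ 2 - 2 * Fintype.card A + 2) :
    ∀ n : ℕ, 2 * n₀ ≤ n → ∀ a b c : A,
      |((substPow σ n [a]).count c : ℝ) / ((substPow σ n [a]).length : ℝ)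
        - ((substPow σ n [b]).count c : ℝ) / ((substPow σ n [b]).length : ℝ)| ≤
      2 * Real.exp (Finset.univ.sup' Finset.univ_nonempty fun d =>
          projMetric (Matrix.vecMul (Pi.single d 1) ((incMatrixR σ) ^ n₀)) α) ^
        (birkhoff ((incMatrixR σ) ^ n₀) ^ (n / n₀ - 1)) - 2 := by
  classical
  set N := Fintype.card A with hN
  set M : Matrix A A ℝ := incMatrixR σ with hM
  set P : Matrix A A ℝ := M ^ n₀ with hP
  -- basic numerology
  have hNN : 2 * N ≤ N ^ 2 := by
    have h1 : N ^ 2 = N * N := sq N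
    have h2' : 2 * N ≤ N * N := Nat.mul_le_mul_right N h2
    omega
  have hn₀2 : 2 ≤ n₀ := by omega
  have hn₀1 : 1 ≤ n₀ := by omega
  -- Wielandt positivity
  have hWie : ∀ m : ℕ, n₀ ≤ m → ∀ a b : A, b ∈ substPow σ m [a] := by
    intro m hm
    exact pf_wielandt h2 σ hσne hprim m (by rw [← hN]; omega)
  have hpow_pos : ∀ m : ℕ, n₀ ≤ m → ∀ a c : A, 0 < (M ^ m) a c := by
    intro m hm a c
    rw [hM, pf_pow_apply σ m a c]
    have : c ∈ substPow σ m [a] := hWie m hm a c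
    exact_mod_cast List.count_pos_iff.2 this
  have hPpos : ∀ a c : A, 0 < P a c := hpow_pos n₀ le_rfl
  have hrow_nonneg : ∀ (m : ℕ) (a c : A), 0 ≤ (M ^ m) a c := by
    intro m a c
    rw [hM, pf_pow_apply σ m a c]
    positivity
  -- lam is positive
  have hlam : 0 < lam := by
    have a₀ := Classical.arbitrary A
    obtain ⟨b₀, hb₀mem, hb₀⟩ : ∃ b₀, b₀ ∈ substPow σ (n₀ - 1) [a₀] ∧ a₀ ∈ σ b₀ := by
      have h1 : a₀ ∈ substPow σ n₀ [a₀] := hWie n₀ le_rfl a₀ a₀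
      have h2' : substPow σ n₀ [a₀] = substWord σ (substPow σ (n₀ - 1) [a₀]) := by
        rw [show n₀ = (n₀ - 1) + 1 by omega]
        exact Function.iterate_succ_apply' _ _ _
      rw [h2'] at h1
      obtain ⟨b₀, hmem, hσb⟩ := List.mem_flatMap.1 h1
      exact ⟨b₀, hmem, hσb⟩
    have hcol : 0 < Matrix.vecMul α M a₀ := by
      rw [pf_vecMul_apply]
      apply Finset.sum_pos'
      · intro b _
        apply mul_nonneg (le_of_lt (hα b))
        rw [hM]
        show (0:ℝ) ≤ ((σ b).count a₀ : ℝ)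
        positivity
      · refine ⟨b₀, Finset.mem_univ b₀, mul_pos (hα b₀) ?_⟩
        rw [hM]
        show (0:ℝ) < ((σ b₀).count a₀ : ℝ)
        exact_mod_cast List.count_pos_iff.2 hb₀
    rw [heig] at hcol
    simp only [Pi.smul_apply, smul_eq_mul] at hcol
    nlinarith [hα a₀]
  -- eigenvector equation for powers
  have hαpow : ∀ j : ℕ, Matrix.vecMul α (M ^ j) = (lam ^ j) • α := by
    intro j
    induction j with
    | zero => simp
    | succ j ih =>
      rw [pow_succ, ← Matrix.vecMul_vecMul, ih, Matrix.smul_vecMul, heig, smul_smul, ← pow_succ]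
  have hlampow : 0 < lam ^ n₀ := pow_pos hlam n₀
  -- the constant D
  set D : ℝ := Finset.univ.sup' Finset.univ_nonempty fun d =>
    projMetric (Matrix.vecMul (Pi.single d 1) P) α with hD
  set τ : ℝ := birkhoff P with hτ
  have hτ0 : 0 ≤ τ := pf_birkhoff_nonneg P hPpos
  -- the contraction chain
  have hchain : ∀ (j m : ℕ), n₀ ≤ m → ∀ a : A,
      projMetric (Matrix.vecMul (Pi.single a 1) (M ^ (m + j * n₀))) α ≤ τ ^ j * D := by
    intro j
    induction j with
    | zero =>
      intro m hm a
      rw [Nat.zero_mul, Nat.add_zero, pow_zero, one_mul]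
      have hsplit : M ^ m = M ^ (m - n₀) * P := by
        rw [hP, ← pow_add]
        congr 1
        omega
      rw [hsplit, ← Matrix.vecMul_vecMul]
      set v : A → ℝ := Matrix.vecMul (Pi.single a 1) (M ^ (m - n₀)) with hv
      have hvval : v = fun c => ((substPow σ (m - n₀) [a]).count c : ℝ) := by
        rw [hv, hM]
        exact pf_vecMul_single_pow σ (m - n₀) a
      have hvnn : ∀ c, 0 ≤ v c := by
        intro c; rw [hvval]; positivity
      obtain ⟨d₀, hd₀⟩ := pf_reach_exists hσne (m - n₀) a
      have hd₀pos : 0 < v d₀ := by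
        rw [hvval]
        dsimp only
        exact_mod_cast List.count_pos_iff.2 hd₀
      exact pf_convex hPpos hα hvnn hd₀pos
    | succ j ih =>
      intro m hm a
      have hsplit : M ^ (m + (j + 1) * n₀) = M ^ (m + j * n₀) * P := by
        rw [hP, ← pow_add]
        congr 1
        ring
      rw [hsplit, ← Matrix.vecMul_vecMul]
      set x : A → ℝ := Matrix.vecMul (Pi.single a 1) (M ^ (m + j * n₀)) with hx
      have hxpos : ∀ c, 0 < x c := by
        intro c
        rw [hx, hM, pf_vecMul_single_pow σ _ a]
        dsimp only
        have : c ∈ substPow σ (m + j * n₀) [a] := hWie _ (by omega) a c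
        exact_mod_cast List.count_pos_iff.2 this
      have hkey : projMetric (Matrix.vecMul x P) α
          = projMetric (Matrix.vecMul x P) (Matrix.vecMul α P) := by
        rw [hαpow n₀, pf_pm_smul_right hlampow]
      rw [hkey]
      calc projMetric (Matrix.vecMul x P) (Matrix.vecMul α P)
          ≤ τ * projMetric x α := pf_contraction hxpos hα hPpos
        _ ≤ τ * (τ ^ j * D) := mul_le_mul_of_nonneg_left (ih m hm a) hτ0
        _ = τ ^ (j + 1) * D := by ring
  -- main estimate
  intro n hn a b c
  set q : ℕ := n / n₀ with hq
  have hq2 : 2 ≤ q := by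
    rw [hq, Nat.le_div_iff_mul_le (by omega : 0 < n₀)]
    omega
  have hqn : q * n₀ ≤ n := Nat.div_mul_le_self n n₀
  have hsub1 : (q - 1) * n₀ = q * n₀ - n₀ := Nat.sub_one_mul q n₀
  set j : ℕ := q - 1 with hj
  set m : ℕ := n - j * n₀ with hm'
  have hmge : n₀ ≤ m := by omega
  have hmn : m + j * n₀ = n := by omega
  have hcha := hchain j m hmge a
  have hchb := hchain j m hmge b
  rw [hmn] at hcha hchb
  -- frequencies
  have hxa : Matrix.vecMul (Pi.single a 1) (M ^ n) = fun c => ((substPow σ n [a]).count c : ℝ) :=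
    pf_vecMul_single_pow σ n a
  have hxb : Matrix.vecMul (Pi.single b 1) (M ^ n) = fun c => ((substPow σ n [b]).count c : ℝ) :=
    pf_vecMul_single_pow σ n b
  have hposa : ∀ c', 0 < ((substPow σ n [a]).count c' : ℝ) := by
    intro c'
    exact_mod_cast List.count_pos_iff.2 (hWie n (by omega) a c')
  have hposb : ∀ c', 0 < ((substPow σ n [b]).count c' : ℝ) := by
    intro c'
    exact_mod_cast List.count_pos_iff.2 (hWie n (by omega) b c')
  have hlena : ((substPow σ n [a]).length : ℝ) = ∑ c', ((substPow σ n [a]).count c' : ℝ) := by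
    rw [pf_length_eq_sum_count]
    push_cast
    rfl
  have hlenb : ((substPow σ n [b]).length : ℝ) = ∑ c', ((substPow σ n [b]).count c' : ℝ) := by
    rw [pf_length_eq_sum_count]
    push_cast
    rfl
  have hfa := pf_freq hposa hα c
  have hfb := pf_freq hposb hα c
  -- pm bounds transferred
  have hpma : projMetric (fun c' => ((substPow σ n [a]).count c' : ℝ)) α ≤ τ ^ j * D := by
    rw [← hxa]; exact hcha
  have hpmb : projMetric (fun c' => ((substPow σ n [b]).count c' : ℝ)) α ≤ τ ^ j * D := by
    rw [← hxb]; exact hchb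
  have hea : Real.exp (projMetric (fun c' => ((substPow σ n [a]).count c' : ℝ)) α)
      ≤ Real.exp (τ ^ j * D) := Real.exp_le_exp.2 hpma
  have heb : Real.exp (projMetric (fun c' => ((substPow σ n [b]).count c' : ℝ)) α)
      ≤ Real.exp (τ ^ j * D) := Real.exp_le_exp.2 hpmb
  -- triangle inequality and conclusion
  have tri := abs_sub_le
    (((substPow σ n [a]).count c : ℝ) / ((substPow σ n [a]).length : ℝ))
    (α c / (∑ a', α a'))
    (((substPow σ n [b]).count c : ℝ) / ((substPow σ n [b]).length : ℝ))
  have hfa' : |((substPow σ n [a]).count c : ℝ) / ((substPow σ n [a]).length : ℝ)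
      - α c / (∑ a', α a')| ≤ Real.exp (τ ^ j * D) - 1 := by
    rw [hlena]
    exact le_trans hfa (by linarith [hea])
  have hfb' : |α c / (∑ a', α a')
      - ((substPow σ n [b]).count c : ℝ) / ((substPow σ n [b]).length : ℝ)|
      ≤ Real.exp (τ ^ j * D) - 1 := by
    rw [abs_sub_comm, hlenb]
    exact le_trans hfb (by linarith [heb])
  have hRHS : (2:ℝ) * Real.exp D ^ (τ ^ j) - 2 = 2 * Real.exp (τ ^ j * D) - 2 := by
    rw [pf_exp_rpow, mul_comm D (τ ^ j)]
  rw [hRHS]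
  calc |((substPow σ n [a]).count c : ℝ) / ((substPow σ n [a]).length : ℝ)
      - ((substPow σ n [b]).count c : ℝ) / ((substPow σ n [b]).length : ℝ)|
      ≤ _ := tri
    _ ≤ (Real.exp (τ ^ j * D) - 1) + (Real.exp (τ ^ j * D) - 1) := add_le_add hfa' hfb'
    _ = 2 * Real.exp (τ ^ j * D) - 2 := by ring
end

section
/- The fixed point u is uniformly recurrent: for every word w ∈ L(u) there exists g ∈ ℕ such that every interval of length g contained in ℤ₊ includes an occurrence of w in u; moreover one may take g = 2·max_{a∈A}|σⁿ(a)| for any n ∈ ℕ such that w occurs in σⁿ(a) for every a ∈ A (such n exists by primitivity). -/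
open List Filter

section Aux

variable {A : Type*}

lemma seg_length (u : ℕ → A) (i j : ℕ) : (seg u i j).length = j - i := by
  simp [seg]

lemma seg_append (u : ℕ → A) {i j k : ℕ} (hij : i ≤ j) (hjk : j ≤ k) :
    seg u i j ++ seg u j k = seg u i k := by
  unfold seg
  obtain ⟨a, rfl⟩ := Nat.exists_eq_add_of_le hij
  obtain ⟨b, rfl⟩ := Nat.exists_eq_add_of_le hjk
  have h1 : i + a - i = a := by omega
  have h2 : i + a + b - (i + a) = b := by omega
  have h3 : i + a + b - i = a + b := by omega
  rw [h1, h2, h3, List.range_add, List.map_append, List.map_map]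
  congr 1
  apply List.map_congr_left
  intro x _
  simp only [Function.comp_apply]
  congr 1
  omega

lemma seg_infix (u : ℕ → A) {a b c d : ℕ} (hab : a ≤ b) (hbc : b ≤ c) (hcd : c ≤ d) :
    seg u b c <:+: seg u a d := by
  refine ⟨seg u a b, seg u c d, ?_⟩
  rw [List.append_assoc, seg_append u hbc hcd, seg_append u hab (hbc.trans hcd)]

lemma seg_succ (u : ℕ → A) (j : ℕ) : seg u 0 (j + 1) = seg u 0 j ++ [u j] := by
  unfold seg
  simp [List.range_succ]

lemma substWord_append (σ : A → List A) (x y : List A) :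
    substWord σ (x ++ y) = substWord σ x ++ substWord σ y := by
  simp [substWord]

lemma substPow_succ' (σ : A → List A) (p : ℕ) (x : List A) :
    substPow σ (p + 1) x = substWord σ (substPow σ p x) := by
  simp [substPow, Function.iterate_succ_apply']

lemma substPow_add (σ : A → List A) (p q : ℕ) (x : List A) :
    substPow σ (p + q) x = substPow σ p (substPow σ q x) := by
  simp [substPow, Function.iterate_add_apply]

lemma substPow_append (σ : A → List A) (p : ℕ) (x y : List A) :
    substPow σ p (x ++ y) = substPow σ p x ++ substPow σ p y := by
  induction p with
  | zero => simp [substPow]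
  | succ p ih => rw [substPow_succ', ih, substWord_append, substPow_succ', substPow_succ']

lemma substPow_nil (σ : A → List A) (p : ℕ) : substPow σ p [] = [] := by
  induction p with
  | zero => simp [substPow]
  | succ p ih => rw [substPow_succ', ih]; simp [substWord]

lemma substPow_cons (σ : A → List A) (p : ℕ) (a : A) (x : List A) :
    substPow σ p (a :: x) = substPow σ p [a] ++ substPow σ p x := by
  have := substPow_append σ p [a] x
  simpa using this

lemma substPow_infix (σ : A → List A) (p : ℕ) {x y : List A} (h : x <:+: y) :
    substPow σ p x <:+: substPow σ p y := by
  obtain ⟨s, t, rfl⟩ := h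
  rw [substPow_append, substPow_append]
  exact ⟨substPow σ p s, substPow σ p t, by rw [List.append_assoc]⟩

lemma substWord_len_ge (σ : A → List A) (hσne : ∀ a, σ a ≠ []) (x : List A) :
    x.length ≤ (substWord σ x).length := by
  induction x with
  | nil => simp [substWord]
  | cons a x ih =>
    have h1 : 1 ≤ (σ a).length := List.length_pos_iff.mpr (hσne a)
    simp only [substWord, List.flatMap_cons, List.length_append, List.length_cons] at *
    omega

lemma substPow_len_ge (σ : A → List A) (hσne : ∀ a, σ a ≠ []) (p : ℕ) (x : List A) :
    x.length ≤ (substPow σ p x).length := by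
  induction p with
  | zero => simp [substPow]
  | succ p ih =>
    rw [substPow_succ']
    exact ih.trans (substWord_len_ge σ hσne _)

lemma substPow_single_pos (σ : A → List A) (hσne : ∀ a, σ a ≠ []) (p : ℕ) (a : A) :
    1 ≤ (substPow σ p [a]).length := by
  have := substPow_len_ge σ hσne p [a]
  simpa using this

lemma substPow_len_lb (σ : A → List A) (p : ℕ) (c : ℕ)
    (h : ∀ a : A, c ≤ (substPow σ p [a]).length) (x : List A) :
    c * x.length ≤ (substPow σ p x).length := by
  induction x with
  | nil => simp [substPow_nil]
  | cons a x ih =>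
    rw [substPow_cons, List.length_append, List.length_cons, Nat.mul_succ]
    have := h a
    omega

/-- Iterated fixed point property: `σ^p` of a prefix is a prefix. -/
lemma fix_pow {σ : A → List A} {u : ℕ → A} (hfix : IsFixedPoint σ u) (p m : ℕ) :
    substPow σ p (seg u 0 m) = seg u 0 (substPow σ p (seg u 0 m)).length := by
  induction p with
  | zero =>
    simp only [substPow, Function.iterate_zero, id_eq, seg_length, Nat.sub_zero]
  | succ p ih =>
    rw [substPow_succ', ih]
    exact hfix _

lemma two_le_of_two_mem {l : List A} {a b : A} (hab : a ≠ b) (ha : a ∈ l) (hb : b ∈ l) :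
    2 ≤ l.length := by
  classical
  have h1 : ({a, b} : Finset A) ⊆ l.toFinset := by
    intro x hx
    simp only [Finset.mem_insert, Finset.mem_singleton] at hx
    rcases hx with rfl | rfl <;> simp [List.mem_toFinset, ha, hb]
  have h2 : ({a, b} : Finset A).card = 2 := Finset.card_pair hab
  calc 2 = ({a, b} : Finset A).card := h2.symm
    _ ≤ l.toFinset.card := Finset.card_le_card h1
    _ ≤ l.length := l.toFinset_card_le

/-- The `j`-th natural `n`-cutting point. -/
def cutLen (σ : A → List A) (u : ℕ → A) (n j : ℕ) : ℕ :=
  (substPow σ n (seg u 0 j)).length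

lemma cutLen_zero (σ : A → List A) (u : ℕ → A) (n : ℕ) : cutLen σ u n 0 = 0 := by
  have h : seg u 0 0 = [] := by simp [seg]
  simp [cutLen, h, substPow_nil]

lemma cutLen_succ (σ : A → List A) (u : ℕ → A) (n j : ℕ) :
    cutLen σ u n (j + 1) = cutLen σ u n j + (substPow σ n [u j]).length := by
  simp only [cutLen, seg_succ, substPow_append, List.length_append]

lemma cutLen_block {σ : A → List A} {u : ℕ → A} (hfix : IsFixedPoint σ u) (n j : ℕ) :
    seg u (cutLen σ u n j) (cutLen σ u n (j + 1)) = substPow σ n [u j] := by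
  have h2 : substPow σ n (seg u 0 j) = seg u 0 (cutLen σ u n j) := fix_pow hfix n j
  have key : seg u 0 (cutLen σ u n j) ++ substPow σ n [u j] = seg u 0 (cutLen σ u n (j+1)) := by
    rw [← h2, ← substPow_append, ← seg_succ]
    exact fix_pow hfix n (j+1)
  have key2 : seg u 0 (cutLen σ u n j) ++ seg u (cutLen σ u n j) (cutLen σ u n (j+1)) =
      seg u 0 (cutLen σ u n (j+1)) :=
    seg_append u (Nat.zero_le _) (by rw [cutLen_succ]; omega)
  exact List.append_cancel_left (key2.trans key.symm)

section FinAux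

variable [Fintype A] [Nonempty A]

lemma len_le_Sp (σ : A → List A) (n : ℕ) (a : A) :
    (substPow σ n [a]).length ≤ Sp σ n :=
  Finset.le_sup' (fun a => (substPow σ n [a]).length) (Finset.mem_univ a)

lemma one_le_Sp (σ : A → List A) (hσne : ∀ a, σ a ≠ []) (n : ℕ) : 1 ≤ Sp σ n := by
  have a₀ : A := Classical.arbitrary A
  exact le_trans (substPow_single_pos σ hσne n a₀) (len_le_Sp σ n a₀)

/-- Every window of length `2 Sp σ n` contains a full block `σ^n(u_j)`. -/
lemma window_lemma {σ : A → List A} {u : ℕ → A} (hσne : ∀ a, σ a ≠ [])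
    (hfix : IsFixedPoint σ u) (n i : ℕ) :
    ∃ j : ℕ, substPow σ n [u j] <:+: seg u i (i + 2 * Sp σ n) := by
  classical
  have hd1 : ∀ j, 1 ≤ (substPow σ n [u j]).length :=
    fun j => substPow_single_pos σ hσne n (u j)
  have hdS : ∀ j, (substPow σ n [u j]).length ≤ Sp σ n := fun j => len_le_Sp σ n (u j)
  have hcj : ∀ j, j ≤ cutLen σ u n j := by
    intro j
    induction j with
    | zero => simp
    | succ j ih => have := cutLen_succ σ u n j; have := hd1 j; omega
  have hex : ∃ j, i ≤ cutLen σ u n j := ⟨i, hcj i⟩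
  set J := Nat.find hex with hJ
  have hj : i ≤ cutLen σ u n J := Nat.find_spec hex
  have hub : cutLen σ u n (J + 1) ≤ i + 2 * Sp σ n := by
    rcases Nat.eq_zero_or_pos J with h0 | hpos
    · have hi0 : i = 0 := by
        have := hj; rw [h0, cutLen_zero] at this; omega
      have hc1 := cutLen_succ σ u n 0
      have hc0 := cutLen_zero σ u n
      have := hdS 0
      rw [h0]
      omega
    · have hlt : ¬ i ≤ cutLen σ u n (J - 1) := Nat.find_min hex (by omega)
      have hlt' : cutLen σ u n (J - 1) < i := Nat.lt_of_not_le hlt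
      have hs1 := cutLen_succ σ u n (J - 1)
      have hs2 := cutLen_succ σ u n J
      have hJ1 : J - 1 + 1 = J := by omega
      rw [hJ1] at hs1
      have := hdS (J - 1)
      have := hdS J
      omega
  refine ⟨J, ?_⟩
  rw [← cutLen_block hfix n J]
  exact seg_infix u hj (by have := cutLen_succ σ u n J; omega) hub

end FinAux

end Aux

/-- Uniform recurrence of the fixed point: every `w ∈ L(u)` occurs in every window of
some length `g`; there is `n` with `w ≺ σⁿ(a)` for all `a` (by primitivity), and for any
such `n` one may take `g = 2 max_a |σⁿ(a)|`. -/
theorem stmt_18 (A : Type*) [Fintype A] [DecidableEq A] [Nonempty A]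
    (h2 : 2 ≤ Fintype.card A)
    (σ : A → List A) (hσne : ∀ a, σ a ≠ [])
    (hprim : IsPrimitiveSubst σ)
    (u : ℕ → A) (hfix : IsFixedPoint σ u) :
    ∀ w ∈ lang u,
      (∃ g : ℕ, 1 ≤ g ∧ ∀ i : ℕ, w <:+: seg u i (i + g)) ∧
      (∃ n : ℕ, ∀ a : A, w <:+: substPow σ n [a]) ∧
      (∀ n : ℕ, (∀ a : A, w <:+: substPow σ n [a]) →
        ∀ i : ℕ, w <:+: seg u i (i + 2 * Sp σ n)) := by
  intro w hw
  obtain ⟨i0, len, rfl⟩ := hw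
  -- Bullet 3: any `n` with `w` infix of every `σ^n(a)` gives gap `2 Sp σ n`.
  have bullet3 : ∀ n : ℕ, (∀ a : A, seg u i0 (i0 + len) <:+: substPow σ n [a]) →
      ∀ i : ℕ, seg u i0 (i0 + len) <:+: seg u i (i + 2 * Sp σ n) := by
    intro n hn i
    obtain ⟨j, hj⟩ := window_lemma hσne hfix n i
    exact (hn (u j)).trans hj
  -- Bullet 2: existence of such an `n`.
  have bullet2 : ∃ n : ℕ, ∀ a : A, seg u i0 (i0 + len) <:+: substPow σ n [a] := by
    obtain ⟨k, hk⟩ := hprim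
    have hk2 : ∀ a : A, 2 ≤ (substPow σ k [a]).length := by
      intro a
      obtain ⟨b, c, hbc⟩ := Fintype.one_lt_card_iff.mp h2
      exact two_le_of_two_mem hbc (hk b a) (hk c a)
    have hgrow : ∀ m : ℕ, ∀ a : A, 2 ^ m ≤ (substPow σ (m * k) [a]).length := by
      intro m
      induction m with
      | zero => intro a; simp [substPow]
      | succ m ih =>
        intro a
        have heq : substPow σ ((m + 1) * k) [a] = substPow σ (m * k) (substPow σ k [a]) := by
          rw [show (m + 1) * k = m * k + k by ring, substPow_add]
        rw [heq]
        calc 2 ^ (m + 1) = 2 ^ m * 2 := by ring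
          _ ≤ 2 ^ m * (substPow σ k [a]).length :=
              Nat.mul_le_mul_left _ (hk2 a)
          _ ≤ _ := substPow_len_lb σ (m * k) (2 ^ m) ih _
    set m := i0 + len with hm
    set p := m * k with hp
    have hg := hgrow m (u 0)
    rw [← hp] at hg
    have hL : i0 + len ≤ (substPow σ p [u 0]).length := by
      have h1 : m < 2 ^ m := Nat.lt_two_pow_self
      omega
    have h01 : seg u 0 1 = [u 0] := by simp [seg, List.range_succ]
    have hpre : substPow σ p [u 0] = seg u 0 (substPow σ p [u 0]).length := by
      rw [← h01]
      exact fix_pow hfix p 1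
    have hw1 : seg u i0 (i0 + len) <:+: substPow σ p [u 0] := by
      rw [hpre]
      exact seg_infix u (Nat.zero_le _) (Nat.le_add_right _ _) hL
    refine ⟨p + k, fun a => ?_⟩
    have hu0 : [u 0] <:+: substPow σ k [a] := by
      obtain ⟨s, t, hst⟩ := List.append_of_mem (hk (u 0) a)
      exact ⟨s, t, by rw [hst]; simp⟩
    have hinf := substPow_infix σ p hu0
    rw [← substPow_add] at hinf
    exact hw1.trans hinf
  refine ⟨?_, bullet2, bullet3⟩
  obtain ⟨n, hn⟩ := bullet2
  exact ⟨2 * Sp σ n, by have := one_le_Sp σ hσne n; omega, bullet3 n hn⟩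
end
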